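/- Let A ⊆ ℤ be syndetic with gap bound M (i.e., every interval of M consecutive integers meets A), and let (α_n)_{n∈ℤ} be non-negative reals such that for some C > 0 and some N ∈ ℤ ∪ {+∞}, α_n ≥ C·α_{n−1} for all n < N and α_n = 0 for all n ≥ N. Then Σ_{n∈A} α_n ≥ (min(1, C^M)/M) · Σ_{n < N−M} α_n. In particular, if Σ_{n∈ℤ} α_n = +∞ then Σ_{n∈A} α_n = +∞. -/

import Mathlib

def SyndeticZWith (M : ℕ) (A : Set ℤ) : Prop :=
  ∀ n : ℤ, ∃ a ∈ A, n ≤ a ∧ a < n + M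

theorem syndetic_sum_lower_bound (A : Set ℤ) (M : ℕ) (hM : 0 < M)
    (hA : SyndeticZWith M A)
    (α : ℤ → ℝ) (hnn : ∀ n, 0 ≤ α n) (C : ℝ) (hC : 0 < C) (N : WithTop ℤ)
    (hgrow : ∀ n : ℤ, (n : WithTop ℤ) < N → C * α (n - 1) ≤ α n)
    (hzero : ∀ n : ℤ, N ≤ (n : WithTop ℤ) → α n = 0) :
    ENNReal.ofReal (min 1 (C ^ M) / M) *
        (∑' n : {n : ℤ // ((n + M : ℤ) : WithTop ℤ) < N}, ENNReal.ofReal (α n)) ≤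
      (∑' a : A, ENNReal.ofReal (α a)) ∧
    ((∑' n : ℤ, ENNReal.ofReal (α n)) = ⊤ → (∑' a : A, ENNReal.ofReal (α a)) = ⊤) := by
  classical
  set F : ℤ → ENNReal := fun n => ENNReal.ofReal (α n) with hFdef
  set c : ℝ := min 1 (C ^ M) with hcdef
  have hc0 : 0 < c := lt_min one_pos (pow_pos hC M)
  set s : Set ℤ := {n : ℤ | ((n + M : ℤ) : WithTop ℤ) < N} with hsdef
  choose a haA haL haU using hA
  -- growth along intervals
  have key : ∀ n ∈ s, c * α n ≤ α (a n) := by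
    intro n hn
    have hn' : ((n + (M : ℤ) : ℤ) : WithTop ℤ) < N := hn
    have aux : ∀ k : ℕ, k ≤ M → C ^ k * α n ≤ α (n + (k : ℤ)) := by
      intro k hk
      induction k with
      | zero => simp
      | succ k ih =>
        have hk' : k ≤ M := Nat.le_of_succ_le hk
        have h1 := ih hk'
        have hle : (n + ((k : ℤ) + 1)) ≤ n + (M : ℤ) := by
          have : (k : ℤ) + 1 ≤ (M : ℤ) := by exact_mod_cast hk
          omega
        have hlt : ((n + ((k : ℤ) + 1) : ℤ) : WithTop ℤ) < N :=
          lt_of_le_of_lt (by exact_mod_cast hle) hn'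
        have h2 := hgrow (n + ((k : ℤ) + 1)) hlt
        have he : n + ((k : ℤ) + 1) - 1 = n + (k : ℤ) := by ring
        rw [he] at h2
        have h3 : C * (C ^ k * α n) ≤ C * α (n + (k : ℤ)) :=
          mul_le_mul_of_nonneg_left h1 hC.le
        have : C ^ (k + 1) * α n = C * (C ^ k * α n) := by ring
        rw [this]
        calc C * (C ^ k * α n) ≤ C * α (n + (k : ℤ)) := h3
          _ ≤ α (n + ((k : ℤ) + 1)) := h2
          _ = α (n + ((k + 1 : ℕ) : ℤ)) := by push_cast; ring_nf
    set j : ℕ := (a n - n).toNat with hjdef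
    have hj : (j : ℤ) = a n - n := Int.toNat_of_nonneg (by linarith [haL n])
    have hjM : j ≤ M := by
      have := haU n
      omega
    have h1 := aux j hjM
    have he : n + (j : ℤ) = a n := by omega
    rw [he] at h1
    have h2 : c ≤ C ^ j := by
      rcases le_total C 1 with hC1 | hC1
      · calc c ≤ C ^ M := min_le_right _ _
          _ ≤ C ^ j := pow_le_pow_of_le_one hC.le hC1 hjM
      · calc c ≤ 1 := min_le_left _ _
          _ ≤ C ^ j := one_le_pow₀ hC1
    calc c * α n ≤ C ^ j * α n := mul_le_mul_of_nonneg_right h2 (hnn n)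
      _ ≤ α (a n) := h1
  have keyF : ∀ n ∈ s, ENNReal.ofReal c * F n ≤ F (a n) := by
    intro n hn
    rw [hFdef]
    rw [← ENNReal.ofReal_mul hc0.le]
    exact ENNReal.ofReal_le_ofReal (key n hn)
  -- the subtype sums as indicator sums
  have X_def : (∑' n : {n : ℤ // ((n + M : ℤ) : WithTop ℤ) < N}, F n)
      = ∑' n : ℤ, s.indicator F n := tsum_subtype s F
  have T_def : (∑' x : A, F x) = ∑' m : ℤ, A.indicator F m := tsum_subtype A F
  set T : ENNReal := ∑' x : A, F x with hTdef
  -- fiber decomposition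
  set sj : ℕ → Set ℤ := fun j => {n : ℤ | n ∈ s ∧ a n = n + j} with hsjdef
  have hdecomp : ∀ n : ℤ, s.indicator (fun m => F (a m)) n
      = ∑ j ∈ Finset.range M, (sj j).indicator (fun m => F (a m)) n := by
    intro n
    by_cases hn : n ∈ s
    · have hj : ((a n - n).toNat : ℤ) = a n - n := Int.toNat_of_nonneg (by linarith [haL n])
      set j0 : ℕ := (a n - n).toNat with hj0
      have hj0M : j0 ∈ Finset.range M := by
        have := haU n
        have := haL n
        simp only [Finset.mem_range]
        omega
      have hmem : n ∈ sj j0 := ⟨hn, by omega⟩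
      rw [Set.indicator_of_mem hn, Finset.sum_eq_single j0]
      · rw [Set.indicator_of_mem hmem]
      · intro b _ hb
        apply Set.indicator_of_notMem
        intro hmem'
        apply hb
        have : a n = n + (b : ℤ) := hmem'.2
        omega
      · intro h; exact absurd hj0M h
    · rw [Set.indicator_of_notMem hn]
      symm
      apply Finset.sum_eq_zero
      intro j _
      apply Set.indicator_of_notMem
      intro hmem'
      exact hn hmem'.1
  -- per-fiber bound
  have hfiber : ∀ j : ℕ, (∑' n : ℤ, (sj j).indicator (fun m => F (a m)) n)
      ≤ ∑' m : ℤ, A.indicator F m := by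
    intro j
    refine Summable.tsum_le_tsum_of_inj (fun n : ℤ => n + (j : ℤ))
      (fun x y h => by exact add_right_cancel h) (fun m _ => zero_le) ?_ ENNReal.summable ENNReal.summable
    intro n
    by_cases hn : n ∈ sj j
    · rw [Set.indicator_of_mem hn]
      have h1 : a n = n + (j : ℤ) := hn.2
      have h2 : (n + (j : ℤ)) ∈ A := h1 ▸ haA n
      rw [Set.indicator_of_mem h2, ← h1]
    · rw [Set.indicator_of_notMem hn]; exact zero_le
  -- middle bound
  have hmid : (∑' n : ℤ, s.indicator (fun m => F (a m)) n) ≤ (M : ENNReal) * T := by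
    calc (∑' n : ℤ, s.indicator (fun m => F (a m)) n)
        = ∑' n : ℤ, ∑ j ∈ Finset.range M, (sj j).indicator (fun m => F (a m)) n := by
          exact tsum_congr hdecomp
      _ = ∑ j ∈ Finset.range M, ∑' n : ℤ, (sj j).indicator (fun m => F (a m)) n :=
          Summable.tsum_finsetSum (fun _ _ => ENNReal.summable)
      _ ≤ ∑ j ∈ Finset.range M, (∑' m : ℤ, A.indicator F m) :=
          Finset.sum_le_sum (fun j _ => hfiber j)
      _ = (M : ENNReal) * T := by
          rw [Finset.sum_const, Finset.card_range, T_def, nsmul_eq_mul]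
  -- main inequality scaled by c
  have h1 : ENNReal.ofReal c * (∑' n : {n : ℤ // ((n + M : ℤ) : WithTop ℤ) < N}, F n)
      ≤ (M : ENNReal) * T := by
    rw [X_def, ← ENNReal.tsum_mul_left]
    refine le_trans (Summable.tsum_le_tsum ?_ ENNReal.summable ENNReal.summable) hmid
    intro n
    by_cases hn : n ∈ s
    · rw [Set.indicator_of_mem hn, Set.indicator_of_mem hn]
      exact keyF n hn
    · rw [Set.indicator_of_notMem hn, Set.indicator_of_notMem hn, mul_zero]
  have hMne : (M : ENNReal) ≠ 0 := by exact_mod_cast hM.ne'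
  have hMtop : (M : ENNReal) ≠ ⊤ := ENNReal.natCast_ne_top M
  have hmain : ENNReal.ofReal (c / M) *
      (∑' n : {n : ℤ // ((n + M : ℤ) : WithTop ℤ) < N}, F n) ≤ T := by
    have hco : ENNReal.ofReal (c / M) = ENNReal.ofReal c / (M : ENNReal) := by
      rw [ENNReal.ofReal_div_of_pos (by exact_mod_cast hM), ENNReal.ofReal_natCast]
    rw [hco, div_eq_mul_inv, mul_right_comm, ← div_eq_mul_inv,
      ENNReal.div_le_iff hMne hMtop]
    calc ENNReal.ofReal c * (∑' n : {n : ℤ // ((n + M : ℤ) : WithTop ℤ) < N}, F n)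
        ≤ (M : ENNReal) * T := h1
      _ = T * (M : ENNReal) := mul_comm _ _
  refine ⟨hmain, ?_⟩
  -- divergence part
  intro htot
  have hXtop : (∑' n : ℤ, s.indicator F n) = ⊤ := by
    rcases N with _ | N0
    · -- N = ⊤
      have hsu : s = Set.univ := by
        ext n
        simp only [hsdef, Set.mem_setOf_eq, Set.mem_univ, iff_true]
        exact WithTop.coe_lt_top _
      rw [hsu]
      simpa using htot
    · -- N = (N0 : ℤ)
      have hsplit : (∑' n : ℤ, F n)
          = (∑' n : ℤ, s.indicator F n) + ∑' n : ℤ, sᶜ.indicator F n := by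
        rw [← ENNReal.tsum_add]
        apply tsum_congr
        intro n
        by_cases hn : n ∈ s
        · rw [Set.indicator_of_mem hn, Set.indicator_of_notMem (by simpa using hn), add_zero]
        · rw [Set.indicator_of_notMem hn, Set.indicator_of_mem (by simpa using hn), zero_add]
      have hcfin : (∑' n : ℤ, sᶜ.indicator F n) ≠ ⊤ := by
        have hle : ∀ n : ℤ, sᶜ.indicator F n ≤ (Set.Ico (N0 - M) N0).indicator F n := by
          intro n
          by_cases hn : n ∈ sᶜ
          · rw [Set.indicator_of_mem hn]
            by_cases hz : n ∈ Set.Ico (N0 - M) N0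
            · rw [Set.indicator_of_mem hz]
            · have hn' : ¬ ((n + (M : ℤ) : ℤ) : WithTop ℤ) < (N0 : WithTop ℤ) := hn
              have hge : N0 ≤ n + M := by
                by_contra hcon
                exact hn' (WithTop.coe_lt_coe.mpr (lt_of_not_ge hcon))
              have hnN : N0 ≤ n := by
                simp only [Set.mem_Ico, not_and, not_lt] at hz
                omega
              have : α n = 0 := hzero n (WithTop.coe_le_coe.mpr hnN)
              simp [hFdef, this]
          · rw [Set.indicator_of_notMem hn]; exact zero_le
        refine ne_top_of_le_ne_top ?_ (Summable.tsum_le_tsum hle ENNReal.summable ENNReal.summable)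
        have hfin : (Set.Ico (N0 - M) N0).Finite := Set.finite_Ico _ _
        rw [tsum_eq_sum (s := hfin.toFinset)
          (fun b hb => Set.indicator_of_notMem (by simpa using hb) F)]
        refine (ENNReal.sum_lt_top.mpr ?_).ne
        intro i _
        exact lt_of_le_of_lt (Set.indicator_le_self _ _ i) ENNReal.ofReal_lt_top
      by_contra hX
      rw [hsplit] at htot
      exact (ENNReal.add_ne_top.mpr ⟨hX, hcfin⟩) htot
  have hcm : ENNReal.ofReal (c / M) ≠ 0 := by
    refine (ENNReal.ofReal_pos.mpr ?_).ne'
    positivity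
  rw [← top_le_iff]
  calc (⊤ : ENNReal) = ENNReal.ofReal (c / M) *
        (∑' n : {n : ℤ // ((n + M : ℤ) : WithTop ℤ) < N}, F n) := by
        rw [X_def, hXtop, ENNReal.mul_top hcm]
    _ ≤ T := hmain
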